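/- Define sequences A_n, B_n by the recurrences (2n+1)A_n - 2n(1+k^2)A_{n-1} + (2n-1)k^2 A_{n-2} = 0 and (2n+1)B_n - 2n(1+k^2)B_{n-1} + (2n-1)k^2 B_{n-2} = 0 with initial conditions A_{-1}=0, A_0=1, B_{-1}=-1, B_0=0. Then for all n ≥ 0, B_n A_{n-1} - A_n B_{n-1} = k^{2n}/(2n+1). -/
import Mathlib


theorem wronskian_identity (k : ℝ) (A B : ℤ → ℝ)
    (hA0 : A (-1) = 0) (hA1 : A 0 = 1) (hB0 : B (-1) = -1) (hB1 : B 0 = 0)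
    (hArec : ∀ n : ℤ, 1 ≤ n →
      (2 * (n : ℝ) + 1) * A n - 2 * n * (1 + k ^ 2) * A (n - 1)
        + (2 * n - 1) * k ^ 2 * A (n - 2) = 0)
    (hBrec : ∀ n : ℤ, 1 ≤ n →
      (2 * (n : ℝ) + 1) * B n - 2 * n * (1 + k ^ 2) * B (n - 1)
        + (2 * n - 1) * k ^ 2 * B (n - 2) = 0) :
    ∀ n : ℕ, B n * A ((n : ℤ) - 1) - A n * B ((n : ℤ) - 1)
      = k ^ (2 * n) / (2 * (n : ℝ) + 1) := by
  intro n
  induction n with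
  | zero => norm_num [hA0, hA1, hB0, hB1]
  | succ n ih =>
    have hm : (1 : ℤ) ≤ (n : ℤ) + 1 := by omega
    have ha := hArec ((n : ℤ) + 1) hm
    have hb := hBrec ((n : ℤ) + 1) hm
    have e1 : ((n : ℤ) + 1) - 1 = (n : ℤ) := by ring
    have e2 : ((n : ℤ) + 1) - 2 = (n : ℤ) - 1 := by ring
    rw [e1, e2] at ha hb
    have h1 : (2 * ((n : ℝ) + 1) + 1) ≠ 0 := by positivity
    have h2 : (2 * (n : ℝ) + 1) ≠ 0 := by positivity
    have key : B ((n : ℤ) + 1) * A (n : ℤ) - A ((n : ℤ) + 1) * B (n : ℤ)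
        = (2 * (n : ℝ) + 1) * k ^ 2
          * (B (n : ℤ) * A ((n : ℤ) - 1) - A (n : ℤ) * B ((n : ℤ) - 1))
          / (2 * ((n : ℝ) + 1) + 1) := by
      field_simp
      push_cast at ha hb
      linear_combination A (n : ℤ) * hb - B (n : ℤ) * ha
    push_cast
    rw [e1, key, ih]
    rw [pow_succ, pow_succ]
    field_simp
    ring
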